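/- Let 𝔏 be a Lie conformal algebra over a field k of characteristic zero, generated by a subset 𝒢 with weight function wt : 𝒢 → ℕ, with filtrations 𝔏'_i and 𝔏_i. Then for all i, j ∈ ℤ and n ∈ ℕ one has 𝔏_i [n] 𝔏_j ⊆ 𝔏'_{i+j+n}. In particular, if there is r ∈ ℕ such that every monomial in 𝒢 of weight ≥ r is zero, then 𝔏_i [n] 𝔏_j = 0 whenever i + j + n ≥ r. -/
import Mathlib


open Finset

/-- A (bundled) conformal algebra over a field `𝕜`. -/
structure ConfAlg (𝕜 : Type) [Field 𝕜] where
  A : Type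
  [ag : AddCommGroup A]
  [mo : Module 𝕜 A]
  mul : ℕ → A →ₗ[𝕜] A →ₗ[𝕜] A
  D : A →ₗ[𝕜] A
  dmul_zero : ∀ a b : A, mul 0 (D a) b = 0
  dmul_succ : ∀ (n : ℕ) (a b : A), mul (n + 1) (D a) b = (-(n + 1 : 𝕜)) • mul n a b
  leibniz : ∀ (n : ℕ) (a b : A), D (mul n a b) = mul n (D a) b + mul n a (D b)
  loc : ∀ a b : A, ∃ N : ℕ, ∀ n : ℕ, N ≤ n → mul n a b = 0

attribute [instance] ConfAlg.ag ConfAlg.mo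

variable {𝕜 : Type} [Field 𝕜]

/-- Divided power of the derivation: `D^{(s)} = D^s / s!`. -/
noncomputable def ConfAlg.dpow (C : ConfAlg 𝕜) (s : ℕ) (a : C.A) : C.A :=
  (s.factorial : 𝕜)⁻¹ • (C.D ^ s) a

/-- Conformal associativity. -/
def ConfAlg.IsAssoc (C : ConfAlg 𝕜) : Prop :=
  ∀ (a b c : C.A) (m n : ℕ),
    C.mul n (C.mul m a b) c =
      ∑ s ∈ Finset.range (m + 1), ((-1 : 𝕜) ^ s * (m.choose s : 𝕜)) •
        C.mul (m - s) a (C.mul (n + s) b c)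

/-- Conformal Jacobi identity together with quasi-symmetry. -/
def ConfAlg.IsLie (C : ConfAlg 𝕜) : Prop :=
  (∀ (a b c : C.A) (m n : ℕ),
    C.mul n (C.mul m a b) c =
      ∑ s ∈ Finset.range (m + 1), ((-1 : 𝕜) ^ s * (m.choose s : 𝕜)) •
        (C.mul (m - s) a (C.mul (n + s) b c) - C.mul (n + s) b (C.mul (m - s) a c))) ∧
  (∀ (a b : C.A) (n N : ℕ), (∀ s : ℕ, N ≤ s → C.mul (n + s) b a = 0) →
    C.mul n a b =
      -∑ s ∈ Finset.range N, ((-1 : 𝕜) ^ (s + n)) • C.dpow s (C.mul (n + s) b a))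

/-- Monomials in a family `f` with weights `wt`; `IsMon C f wt w v` means `w`
is a monomial (arbitrary placement of parentheses) of weight `v`. -/
inductive ConfAlg.IsMon (C : ConfAlg 𝕜) {I : Type} (f : I → C.A) (wt : I → ℕ) : C.A → ℕ → Prop
  | base (i : I) : ConfAlg.IsMon C f wt (f i) (wt i)
  | mul (n : ℕ) {a b : C.A} {wa wb : ℕ} :
      ConfAlg.IsMon C f wt a wa → ConfAlg.IsMon C f wt b wb →
      ConfAlg.IsMon C f wt (C.mul n a b) (wa + wb + n)

/-- `G` generates `C`. -/
def ConfAlg.Generates (C : ConfAlg 𝕜) (G : Set C.A) : Prop :=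
  ∀ p : Submodule 𝕜 C.A, G ⊆ ↑p → (∀ a ∈ p, C.D a ∈ p) →
    (∀ (n : ℕ) (a b : C.A), a ∈ p → b ∈ p → C.mul n a b ∈ p) → ∀ x : C.A, x ∈ p

/-- The filtration `𝔏'_i`. -/
def ConfAlg.Lp (C : ConfAlg 𝕜) {I : Type} (f : I → C.A) (wt : I → ℕ) (i : ℤ) :
    Submodule 𝕜 C.A :=
  Submodule.span 𝕜 {x : C.A | ∃ (m : ℕ) (w : C.A) (v : ℕ),
    C.IsMon f wt w v ∧ x = (C.D ^ m) w ∧ i + m ≤ (v : ℤ)}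

/-- The filtration `𝔏_i`. -/
def ConfAlg.Lf (C : ConfAlg 𝕜) {I : Type} (f : I → C.A) (wt : I → ℕ) (i : ℤ) : Set C.A :=
  {a : C.A | ∃ n : ℕ, (C.D ^ n) a ∈ C.Lp f wt (i - n)}


namespace ConfAlg

variable {C : ConfAlg 𝕜} {I : Type} {f : I → C.A} {wt : I → ℕ}

lemma Lp_mono {i i' : ℤ} (h : i' ≤ i) : C.Lp f wt i ≤ C.Lp f wt i' := by
  apply Submodule.span_mono
  rintro x ⟨m, w, v, hm, rfl, hv⟩
  exact ⟨m, w, v, hm, rfl, by omega⟩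

lemma mem_Lp_mon {w : C.A} {v : ℕ} (hw : C.IsMon f wt w v) {i : ℤ} (m : ℕ)
    (h : i + m ≤ v) : (C.D ^ m) w ∈ C.Lp f wt i :=
  Submodule.subset_span ⟨m, w, v, hw, rfl, h⟩

lemma D_mem_Lp {x : C.A} {i : ℤ} (h : x ∈ C.Lp f wt i) : C.D x ∈ C.Lp f wt (i - 1) := by
  induction h using Submodule.span_induction with
  | mem x hx =>
    obtain ⟨m, w, v, hm, rfl, hv⟩ := hx
    have : C.D ((C.D ^ m) w) = (C.D ^ (m + 1)) w := by
      rw [pow_succ']; rfl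
    rw [this]
    exact mem_Lp_mon hm (m + 1) (by push_cast; omega)
  | zero => simpa using Submodule.zero_mem _
  | add x y _ _ hx hy => rw [map_add]; exact Submodule.add_mem _ hx hy
  | smul c x _ hx => rw [map_smul]; exact Submodule.smul_mem _ _ hx

lemma powD_mem_Lp {x : C.A} {i : ℤ} (s : ℕ) (h : x ∈ C.Lp f wt i) :
    (C.D ^ s) x ∈ C.Lp f wt (i - s) := by
  induction s with
  | zero => simpa using h
  | succ s ih =>
    have : (C.D ^ (s + 1)) x = C.D ((C.D ^ s) x) := by rw [pow_succ']; rfl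
    rw [this]
    exact Lp_mono (by push_cast; omega) (D_mem_Lp ih)

lemma dpow_mem_Lp {x : C.A} {i : ℤ} (s : ℕ) (h : x ∈ C.Lp f wt i) :
    C.dpow s x ∈ C.Lp f wt (i - s) :=
  Submodule.smul_mem _ _ (powD_mem_Lp s h)


lemma monA1 {u w : C.A} {vu vw : ℕ} (hu : C.IsMon f wt u vu) (hw : C.IsMon f wt w vw)
    (q : ℕ) : ∀ n : ℕ, C.mul n u ((C.D ^ q) w) ∈ C.Lp f wt ((vu : ℤ) + vw + n - q) := by
  induction q with
  | zero =>
    intro n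
    have h := mem_Lp_mon (i := (vu : ℤ) + vw + n - 0) (ConfAlg.IsMon.mul n hu hw) 0
      (by push_cast; omega)
    simpa using h
  | succ q ih =>
    intro n
    have hy : (C.D ^ (q + 1)) w = C.D ((C.D ^ q) w) := by rw [pow_succ']; rfl
    set y := (C.D ^ q) w with hydef
    have hleib : C.mul n u (C.D y) = C.D (C.mul n u y) - C.mul n (C.D u) y := by
      have := C.leibniz n u y
      abel_nf
      rw [this]; abel
    rw [hy, hleib]
    match n with
    | 0 =>
      rw [C.dmul_zero, sub_zero]
      exact Lp_mono (by push_cast; omega) (D_mem_Lp (ih 0))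
    | Nat.succ m =>
      rw [C.dmul_succ]
      apply Submodule.sub_mem
      · exact Lp_mono (by push_cast; omega) (D_mem_Lp (ih (m + 1)))
      · exact Submodule.smul_mem _ _ (Lp_mono (by push_cast; omega) (ih m))

lemma monA {u w : C.A} {vu vw : ℕ} (hu : C.IsMon f wt u vu) (hw : C.IsMon f wt w vw)
    (p q : ℕ) : ∀ n : ℕ,
    C.mul n ((C.D ^ p) u) ((C.D ^ q) w) ∈ C.Lp f wt ((vu : ℤ) - p + vw - q + n) := by
  induction p with
  | zero =>
    intro n
    have := monA1 hu hw q n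
    simpa using Lp_mono (by push_cast; omega) this
  | succ p ih =>
    intro n
    have hx : (C.D ^ (p + 1)) u = C.D ((C.D ^ p) u) := by rw [pow_succ']; rfl
    rw [hx]
    match n with
    | 0 => rw [C.dmul_zero]; exact Submodule.zero_mem _
    | Nat.succ m =>
      rw [C.dmul_succ]
      exact Submodule.smul_mem _ _ (Lp_mono (by push_cast; omega) (ih m))

lemma Lp_mul_Lp {i j : ℤ} (n : ℕ) {a b : C.A} (ha : a ∈ C.Lp f wt i)
    (hb : b ∈ C.Lp f wt j) : C.mul n a b ∈ C.Lp f wt (i + j + n) := by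
  have h2 := Submodule.apply_mem_map₂ (C.mul n) ha hb
  have hle : Submodule.map₂ (C.mul n) (C.Lp f wt i) (C.Lp f wt j) ≤ C.Lp f wt (i + j + n) := by
    rw [ConfAlg.Lp, ConfAlg.Lp, Submodule.map₂_span_span]
    apply Submodule.span_le.2
    rintro x ⟨u', hu', w', hw', rfl⟩
    obtain ⟨p, u, vu, hu, rfl, hvu⟩ := hu'
    obtain ⟨q, w, vw, hw, rfl, hvw⟩ := hw'
    exact Lp_mono (by omega) (monA hu hw p q n)
  exact hle h2


lemma Lf_mul_Lp [CharZero 𝕜] :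
    ∀ p : ℕ, ∀ (i : ℤ) (a : C.A), (C.D ^ p) a ∈ C.Lp f wt (i - p) →
      ∀ (j : ℤ) (n : ℕ) (b : C.A), b ∈ C.Lp f wt j →
        C.mul n a b ∈ C.Lp f wt (i + j + n) := by
  intro p
  induction p with
  | zero =>
    intro i a ha j n b hb
    rw [pow_zero, Module.End.one_apply] at ha
    exact Lp_mul_Lp n (Lp_mono (by push_cast; omega) ha) hb
  | succ p ih =>
    intro i a ha j n b hb
    have ha' : (C.D ^ p) (C.D a) ∈ C.Lp f wt ((i - 1) - p) := by
      rw [← Module.End.mul_apply, ← pow_succ]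
      exact Lp_mono (by push_cast; omega) ha
    have key := ih (i - 1) (C.D a) ha' j (n + 1) b hb
    rw [C.dmul_succ] at key
    have hne : (-(n + 1 : 𝕜)) ≠ 0 :=
      neg_ne_zero.2 (by exact_mod_cast Nat.succ_ne_zero n)
    have heq : C.mul n a b = (-(n + 1 : 𝕜))⁻¹ • ((-(n + 1 : 𝕜)) • C.mul n a b) := by
      rw [smul_smul, inv_mul_cancel₀ hne, one_smul]
    rw [heq]
    exact Submodule.smul_mem _ _ (Lp_mono (by push_cast; omega) key)

lemma Lp_mul_Lf [CharZero 𝕜] (hLie : C.IsLie) {i j : ℤ} (n : ℕ) {a b : C.A}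
    (ha : a ∈ C.Lp f wt i) (hb : b ∈ C.Lf f wt j) :
    C.mul n a b ∈ C.Lp f wt (i + j + n) := by
  obtain ⟨N, hN⟩ := C.loc b a
  have hqs := hLie.2 a b n N (fun s hs => hN (n + s) (by omega))
  rw [hqs]
  apply Submodule.neg_mem
  apply Submodule.sum_mem
  intro s _
  apply Submodule.smul_mem
  obtain ⟨t, hbt⟩ := hb
  have h1 := Lf_mul_Lp t j b hbt i (n + s) a ha
  have h2 := dpow_mem_Lp s h1
  exact Lp_mono (by push_cast; omega) h2

lemma Lf_mul_Lf [CharZero 𝕜] (hLie : C.IsLie) :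
    ∀ p : ℕ, ∀ (i : ℤ) (a : C.A), (C.D ^ p) a ∈ C.Lp f wt (i - p) →
      ∀ (j : ℤ) (n : ℕ) (b : C.A), b ∈ C.Lf f wt j →
        C.mul n a b ∈ C.Lp f wt (i + j + n) := by
  intro p
  induction p with
  | zero =>
    intro i a ha j n b hb
    rw [pow_zero, Module.End.one_apply] at ha
    exact Lp_mul_Lf hLie n (Lp_mono (by push_cast; omega) ha) hb
  | succ p ih =>
    intro i a ha j n b hb
    have ha' : (C.D ^ p) (C.D a) ∈ C.Lp f wt ((i - 1) - p) := by
      rw [← Module.End.mul_apply, ← pow_succ]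
      exact Lp_mono (by push_cast; omega) ha
    have key := ih (i - 1) (C.D a) ha' j (n + 1) b hb
    rw [C.dmul_succ] at key
    have hne : (-(n + 1 : 𝕜)) ≠ 0 :=
      neg_ne_zero.2 (by exact_mod_cast Nat.succ_ne_zero n)
    have heq : C.mul n a b = (-(n + 1 : 𝕜))⁻¹ • ((-(n + 1 : 𝕜)) • C.mul n a b) := by
      rw [smul_smul, inv_mul_cancel₀ hne, one_smul]
    rw [heq]
    exact Submodule.smul_mem _ _ (Lp_mono (by push_cast; omega) key)

lemma Lp_eq_bot {r : ℕ} (hz : ∀ w v, C.IsMon f wt w v → r ≤ v → w = 0) {k : ℤ}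
    (hk : (r : ℤ) ≤ k) : C.Lp f wt k = ⊥ := by
  rw [ConfAlg.Lp, Submodule.span_eq_bot]
  rintro x ⟨m, w, v, hm, rfl, hv⟩
  rw [hz w v hm (by omega), map_zero]

end ConfAlg

/-- `𝔏_i [n] 𝔏_j ⊆ 𝔏'_{i+j+n}`; in particular, if every monomial in `𝒢` of
weight `≥ r` is zero, then `𝔏_i [n] 𝔏_j = 0` whenever `i + j + n ≥ r`. -/
theorem filtration_Lf_mul
    [CharZero 𝕜] (C : ConfAlg 𝕜) (hLie : C.IsLie) (G : Set C.A) (wt : ↥G → ℕ)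
    (hgen : C.Generates G) :
    (∀ (i j : ℤ) (n : ℕ) (a b : C.A),
        a ∈ C.Lf (Subtype.val : ↥G → C.A) wt i →
        b ∈ C.Lf (Subtype.val : ↥G → C.A) wt j →
        C.mul n a b ∈ C.Lp (Subtype.val : ↥G → C.A) wt (i + j + n)) ∧
    (∀ r : ℕ, (∀ (w : C.A) (v : ℕ),
        C.IsMon (Subtype.val : ↥G → C.A) wt w v → r ≤ v → w = 0) →
      ∀ (i j : ℤ) (n : ℕ), (r : ℤ) ≤ i + j + n →
        ∀ a b : C.A, a ∈ C.Lf (Subtype.val : ↥G → C.A) wt i →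
          b ∈ C.Lf (Subtype.val : ↥G → C.A) wt j → C.mul n a b = 0) := by
  constructor
  · rintro i j n a b ⟨p, hp⟩ hb
    exact ConfAlg.Lf_mul_Lf hLie p i a hp j n b hb
  · rintro r hz i j n hr a b ⟨p, hp⟩ hb
    have h1 := ConfAlg.Lf_mul_Lf hLie p i a hp j n b hb
    rw [ConfAlg.Lp_eq_bot hz hr] at h1
    simpa using h1
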